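/- With D_q and S_q the Askey–Wilson divided-difference and averaging operators, and U₂(x) = (α²-1)(x²-1) where α=(q^{1/2}+q^{-1/2})/2, one has for all polynomials f, g: S_q(fg) = (D_q f)(D_q g)·U₂ + (S_q f)(S_q g). -/
import Mathlib


noncomputable def xlat (q : ℝ) (s : ℂ) : ℂ := ((q : ℂ) ^ s + (q : ℂ) ^ (-s)) / 2

noncomputable def Dq (q : ℝ) (f : Polynomial ℂ) (s : ℂ) : ℂ :=
  (f.eval (xlat q (s + 1/2)) - f.eval (xlat q (s - 1/2))) /
    (xlat q (s + 1/2) - xlat q (s - 1/2))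

noncomputable def Sq (q : ℝ) (f : Polynomial ℂ) (s : ℂ) : ℂ :=
  (f.eval (xlat q (s + 1/2)) + f.eval (xlat q (s - 1/2))) / 2

noncomputable def alphaQ (q : ℝ) : ℝ := (q ^ ((1 : ℝ) / 2) + q ^ (-(1 : ℝ) / 2)) / 2

lemma aux_stmt5 (P Q E u v : ℂ) (hE : E ≠ 0) (huv : u * v * 4 = E ^ 2) :
    P / E * (Q / E) * u * v = P * Q / 4 := by
  field_simp
  linear_combination P * Q * huv

theorem stmt_5 (q : ℝ) (hq0 : 0 < q) (hq1 : q < 1) (f g : Polynomial ℂ) (s : ℂ)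
    (hs : xlat q (s + 1/2) ≠ xlat q (s - 1/2)) :
    Sq q (f * g) s =
      Dq q f s * Dq q g s * (((alphaQ q : ℂ)) ^ 2 - 1) * ((xlat q s) ^ 2 - 1) +
        Sq q f s * Sq q g s := by
  have hqc : (q : ℂ) ≠ 0 := by exact_mod_cast hq0.ne'
  set a : ℂ := (q : ℂ) ^ s with ha_def
  set r : ℂ := (q : ℂ) ^ ((1 : ℂ)/2) with hr_def
  have ha : a ≠ 0 := by simp [ha_def, Complex.cpow_eq_zero_iff, hqc]
  have hr : r ≠ 0 := by simp [hr_def, Complex.cpow_eq_zero_iff, hqc]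
  have h1 : (q : ℂ) ^ (s + 1/2) = a * r := Complex.cpow_add _ _ hqc
  have h2 : (q : ℂ) ^ (-(s + 1/2)) = a⁻¹ * r⁻¹ := by
    rw [Complex.cpow_neg, h1, mul_inv]
  have h3 : (q : ℂ) ^ (s - 1/2) = a * r⁻¹ := by
    rw [sub_eq_add_neg, Complex.cpow_add _ _ hqc, Complex.cpow_neg]
  have h4 : (q : ℂ) ^ (-(s - 1/2)) = a⁻¹ * r := by
    rw [Complex.cpow_neg, h3, mul_inv, inv_inv]
  have h5 : (q : ℂ) ^ (-s) = a⁻¹ := by rw [Complex.cpow_neg]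
  have hα : ((alphaQ q : ℝ) : ℂ) = (r + r⁻¹) / 2 := by
    have e1 : ((q ^ ((1:ℝ)/2) : ℝ) : ℂ) = r := by
      rw [hr_def, Complex.ofReal_cpow hq0.le]; norm_num
    have e2 : ((q ^ (-(1:ℝ)/2) : ℝ) : ℂ) = r⁻¹ := by
      rw [show (-(1:ℝ)/2) = -((1:ℝ)/2) by ring, Real.rpow_neg hq0.le,
        Complex.ofReal_inv, e1]
    rw [alphaQ, Complex.ofReal_div, Complex.ofReal_add, e1, e2]
    norm_num
  simp only [xlat, h1, h2, h3, h4, h5] at hs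
  have hab : a * a⁻¹ = 1 := mul_inv_cancel₀ ha
  have hrt : r * r⁻¹ = 1 := mul_inv_cancel₀ hr
  simp only [Sq, Dq, xlat, Polynomial.eval_mul, h1, h2, h3, h4, h5, hα]
  set X : ℂ := (a * r + a⁻¹ * r⁻¹) / 2 with hX
  set Y : ℂ := (a * r⁻¹ + a⁻¹ * r) / 2 with hY
  set A : ℂ := f.eval X
  set B : ℂ := f.eval Y
  set C : ℂ := g.eval X
  set D : ℂ := g.eval Y
  have hA2 : ((a + a⁻¹) / 2) ^ 2 - 1 = ((a - a⁻¹) / 2) ^ 2 := by linear_combination hab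
  have hR2 : ((r + r⁻¹) / 2) ^ 2 - 1 = ((r - r⁻¹) / 2) ^ 2 := by linear_combination hrt
  rw [hA2, hR2]
  have hEfac : X - Y = (a - a⁻¹) * (r - r⁻¹) / 2 := by rw [hX, hY]; ring
  rw [hEfac]
  have hE : (a - a⁻¹) * (r - r⁻¹) / 2 ≠ 0 := by
    rw [← hEfac]; exact sub_ne_zero.mpr hs
  rw [aux_stmt5 (A - B) (C - D) _ _ _ hE (by ring)]
  ring
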